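/- Let q ≥ 1, let Σ be a symmetric positive definite q×q real matrix, and let a > 0 and b > 0. Then ∫_{ℝ^q} x xᵀ · p_eg(x; Σ, a, b) dx = (a·b/q) · Σ (entrywise equality of q×q matrices). In particular, if b = q/a then the covariance matrix of the elliptical gamma distribution equals Σ. -/

import Mathlib

open Matrix Classical

/-- Principal (symmetric positive semidefinite) square root of a matrix;
junk value `0` if the matrix is not positive semidefinite. -/
noncomputable def matSqrt {q : ℕ} (A : Matrix (Fin q) (Fin q) ℝ) : Matrix (Fin q) (Fin q) ℝ :=
  if h : A.PosSemidef then
    h.1.eigenvectorUnitary.1 * diagonal ((↑) ∘ (h.1.eigenvalues · |>.sqrt)) *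
      (star h.1.eigenvectorUnitary : Matrix (Fin q) (Fin q) ℝ)
  else 0

/-- Loewner order: `loewnerLE A B` iff `B - A` is positive semidefinite. -/
def loewnerLE {q : ℕ} (A B : Matrix (Fin q) (Fin q) ℝ) : Prop := (B - A).PosSemidef

/-- Largest eigenvalue of a (Hermitian) matrix; junk value `0` otherwise. -/
noncomputable def maxEig {q : ℕ} (A : Matrix (Fin q) (Fin q) ℝ) : ℝ :=
  if h : A.IsHermitian then ⨆ i, h.eigenvalues i else 0

/-- Smallest eigenvalue of a (Hermitian) matrix; junk value `0` otherwise. -/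
noncomputable def minEig {q : ℕ} (A : Matrix (Fin q) (Fin q) ℝ) : ℝ :=
  if h : A.IsHermitian then ⨅ i, h.eigenvalues i else 0

/-- The elliptical gamma density
`p_eg(x; Σ, a, b) = Γ(q/2) / (π^(q/2) Γ(a) b^a det(Σ)^(1/2)) (xᵀΣ⁻¹x)^(a-q/2) exp(-xᵀΣ⁻¹x/b)`. -/
noncomputable def pEG {q : ℕ} (S : Matrix (Fin q) (Fin q) ℝ) (a b : ℝ) (x : Fin q → ℝ) : ℝ :=
  Real.Gamma ((q : ℝ) / 2) /
    (Real.pi ^ ((q : ℝ) / 2) * Real.Gamma a * b ^ a * S.det ^ ((1 : ℝ) / 2)) *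
    (x ⬝ᵥ S⁻¹ *ᵥ x) ^ (a - (q : ℝ) / 2) * Real.exp (-(x ⬝ᵥ S⁻¹ *ᵥ x) / b)

open MeasureTheory Set


lemma integral_comp_mulVec {q : ℕ} (M : Matrix (Fin q) (Fin q) ℝ) (hM : M.det ≠ 0)
    (g : (Fin q → ℝ) → ℝ) :
    ∫ x : Fin q → ℝ, g x = |M.det| * ∫ y : Fin q → ℝ, g (M *ᵥ y) := by
  have hInv : Invertible M := M.invertibleOfIsUnitDet (isUnit_iff_ne_zero.mpr hM)
  let e : (Fin q → ℝ) ≃ₗ[ℝ] (Fin q → ℝ) := M.toLinearEquiv' hInv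
  let em : (Fin q → ℝ) ≃ᵐ (Fin q → ℝ) :=
    e.toContinuousLinearEquiv.toHomeomorph.toMeasurableEquiv
  have hc : (⇑em : (Fin q → ℝ) → (Fin q → ℝ)) = fun y => M *ᵥ y := rfl
  have hdet : LinearMap.det (Matrix.toLin' M) = M.det := LinearMap.det_toLin' M
  have hmap : Measure.map (⇑em) (volume : Measure (Fin q → ℝ)) =
      ENNReal.ofReal |M.det⁻¹| • volume := by
    have h2 : (⇑em : (Fin q → ℝ) → (Fin q → ℝ)) = ⇑(Matrix.toLin' M) := rfl
    rw [h2]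
    have := Measure.map_linearMap_addHaar_pi_eq_smul_addHaar (f := Matrix.toLin' M)
      (by rw [hdet]; exact hM) (volume : Measure (Fin q → ℝ))
    rw [this, hdet]
  have := MeasureTheory.integral_map_equiv (μ := (volume : Measure (Fin q → ℝ))) em g
  rw [hmap] at this
  rw [integral_smul_measure] at this
  rw [hc] at this
  rw [← this, ENNReal.toReal_ofReal (abs_nonneg _), smul_eq_mul, abs_inv, ← mul_assoc,
    mul_inv_cancel₀ (by simpa using hM), one_mul]


lemma one_dim_integral {b c : ℝ} (hb : 0 < b) (hc : 0 < c) :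
    ∫ r in Ioi (0:ℝ), r ^ (2*c - 1) * Real.exp (-(r^2)/b) = b ^ c * Real.Gamma c / 2 := by
  have key := integral_comp_rpow_Ioi (fun u => u ^ (c-1) * Real.exp (-u/b)) (p := 2) two_ne_zero
  have h1 : ∀ r ∈ Ioi (0:ℝ), (|(2:ℝ)| * r ^ ((2:ℝ) - 1)) •
      ((r ^ (2:ℝ)) ^ (c-1) * Real.exp (-(r ^ (2:ℝ))/b))
      = 2 * (r ^ (2*c - 1) * Real.exp (-(r^2)/b)) := by
    intro r hr
    have hr0 : (0:ℝ) < r := hr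
    have h2 : (r : ℝ) ^ (2:ℝ) = r ^ 2 := by
      rw [← Real.rpow_natCast r 2]; norm_num
    rw [h2, smul_eq_mul, ← Real.rpow_natCast r 2, ← Real.rpow_mul hr0.le]
    rw [abs_of_nonneg (by norm_num : (0:ℝ) ≤ 2)]
    have : (2:ℝ) * c - 1 = ((2:ℝ)-1) + 2 * (c - 1) := by ring
    rw [this, Real.rpow_add hr0]
    push_cast
    ring
  rw [setIntegral_congr_fun measurableSet_Ioi h1] at key
  rw [integral_const_mul] at key
  have key2 : ∫ u in Ioi (0:ℝ), u ^ (c-1) * Real.exp (-u/b) = b ^ c * Real.Gamma c := by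
    have := integral_comp_mul_left_Ioi (fun u => u ^ (c-1) * Real.exp (-u/b)) 0 hb
    rw [mul_zero] at this
    have h3 : ∀ r ∈ Ioi (0:ℝ), (b * r) ^ (c-1) * Real.exp (-(b*r)/b)
        = b ^ (c-1) * (r ^ (c-1) * Real.exp (-r)) := by
      intro r hr
      rw [Real.mul_rpow hb.le (le_of_lt hr)]
      have hbr : -(b*r)/b = -r := by
        rw [neg_div]; congr 1; rw [mul_comm]; exact mul_div_cancel_right₀ r hb.ne'
      rw [hbr]; ring
    rw [setIntegral_congr_fun measurableSet_Ioi h3, integral_const_mul] at this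
    rw [Real.Gamma_eq_integral hc]
    have h4 : ∫ r in Ioi (0:ℝ), Real.exp (-r) * r ^ (c-1)
        = ∫ r in Ioi (0:ℝ), r ^ (c-1) * Real.exp (-r) := by
      congr 1; ext r; ring
    rw [h4]
    rw [smul_eq_mul] at this
    beta_reduce at this
    have hb' : b ≠ 0 := hb.ne'
    have h5 : (∫ u in Ioi (0:ℝ), u ^ (c-1) * Real.exp (-u/b))
        = b * (b ^ (c-1) * ∫ r in Ioi (0:ℝ), r ^ (c-1) * Real.exp (-r)) := by
      rw [this, ← mul_assoc, mul_inv_cancel₀ hb', one_mul]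
    have hbc : b ^ c = b * b ^ (c-1) := by
      rw [show c = 1 + (c-1) by ring, Real.rpow_add hb, Real.rpow_one]
      ring_nf
    rw [h5, hbc]; ring
  -- key : ∫ = 2 * ∫ our integrand ; so ours = key2/2
  rw [key2] at key
  linarith [key]

lemma radial_eval {q : ℕ} (hq : 1 ≤ q) {b c : ℝ} (hb : 0 < b) (hc : 0 < c) :
    ∫ y : Fin q → ℝ, (y ⬝ᵥ y) ^ (c - (q:ℝ)/2) * Real.exp (-(y ⬝ᵥ y)/b)
      = (Real.sqrt Real.pi ^ q / Real.Gamma ((q:ℝ)/2 + 1)) * (q : ℝ) *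
        (b ^ c * Real.Gamma c / 2) := by
  haveI : Nonempty (Fin q) := Fin.pos_iff_nonempty.mp hq
  haveI : Nontrivial (EuclideanSpace ℝ (Fin q)) := inferInstance
  set F : (Fin q → ℝ) → ℝ :=
    fun y => (y ⬝ᵥ y) ^ (c - (q:ℝ)/2) * Real.exp (-(y ⬝ᵥ y)/b) with hF
  have hA : ∫ y : Fin q → ℝ, F y
      = ∫ x : EuclideanSpace ℝ (Fin q), F ((MeasurableEquiv.toLp 2 (Fin q → ℝ)).symm x) :=
    ((EuclideanSpace.volume_preserving_symm_measurableEquiv_toLp (Fin q)).integral_comp' F).symm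
  have hdot : ∀ x : EuclideanSpace ℝ (Fin q),
      ((MeasurableEquiv.toLp 2 (Fin q → ℝ)).symm x) ⬝ᵥ ((MeasurableEquiv.toLp 2 (Fin q → ℝ)).symm x)
        = ‖x‖^2 := by
    intro x
    rw [EuclideanSpace.norm_eq, Real.sq_sqrt (by positivity)]
    simp [dotProduct, MeasurableEquiv.toLp_symm_apply, Real.norm_eq_abs, sq_abs, sq]
  have hB : ∫ x : EuclideanSpace ℝ (Fin q), F ((MeasurableEquiv.toLp 2 (Fin q → ℝ)).symm x)
      = ∫ x : EuclideanSpace ℝ (Fin q),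
          (fun r : ℝ => (r^2) ^ (c - (q:ℝ)/2) * Real.exp (-(r^2)/b)) ‖x‖ := by
    congr 1; ext x; rw [hF]; simp only [hdot x]
  rw [hA, hB, MeasureTheory.integral_fun_norm_addHaar
    (volume : Measure (EuclideanSpace ℝ (Fin q)))
    (fun r : ℝ => (r^2) ^ (c - (q:ℝ)/2) * Real.exp (-(r^2)/b))]
  rw [finrank_euclideanSpace_fin]
  have hball : (volume : Measure (EuclideanSpace ℝ (Fin q))).real (Metric.ball 0 1)
      = Real.sqrt Real.pi ^ q / Real.Gamma ((q:ℝ)/2 + 1) := by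
    rw [measureReal_def, EuclideanSpace.volume_ball (Fin q) 0 1]
    simp only [Fintype.card_fin, ENNReal.ofReal_one, one_pow, one_mul]
    rw [ENNReal.toReal_ofReal (by positivity)]
  rw [hball]
  have hinner : ∫ r in Ioi (0:ℝ), r ^ (q-1) • ((r^2) ^ (c - (q:ℝ)/2) * Real.exp (-(r^2)/b))
      = b ^ c * Real.Gamma c / 2 := by
    rw [← one_dim_integral hb hc]
    refine setIntegral_congr_fun measurableSet_Ioi ?_
    intro r hr
    beta_reduce
    have hr0 : (0:ℝ) < r := hr
    have h2 : (r:ℝ)^2 = r ^ ((2:ℕ):ℝ) := by rw [Real.rpow_natCast]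
    have hq1 : ((q - 1 : ℕ) : ℝ) = (q:ℝ) - 1 := by
      push_cast [Nat.cast_sub hq]; ring
    rw [smul_eq_mul, ← Real.rpow_natCast r (q-1), hq1]
    nth_rewrite 1 [h2]
    rw [← Real.rpow_mul hr0.le, ← mul_assoc, ← Real.rpow_add hr0]
    have he : ((q:ℝ)-1) + ((2:ℕ):ℝ)*(c - (q:ℝ)/2) = 2*c-1 := by push_cast; ring
    rw [he]
  rw [hinner]
  simp only [nsmul_eq_mul, smul_eq_mul]
  ring

theorem pEG_second_moment_main {q : ℕ} (hq : 1 ≤ q)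
    {S : Matrix (Fin q) (Fin q) ℝ} (hS : S.PosDef)
    {a b : ℝ} (ha : 0 < a) (hb : 0 < b) :
    ∀ i j : Fin q,
        ∫ x : Fin q → ℝ, x i * x j * pEG S a b x = a * b / q * S i j := by
  intro i j
  haveI : Nonempty (Fin q) := Fin.pos_iff_nonempty.mp hq
  have hq0 : (0:ℝ) < (q:ℝ) := by exact_mod_cast hq
  set i0 : Fin q := ⟨0, hq⟩ with hi0
  open scoped MatrixOrder in
  set B : Matrix (Fin q) (Fin q) ℝ := CFC.sqrt S with hBdef
  open scoped MatrixOrder in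
  have hBps : B.PosSemidef := (CFC.sqrt_nonneg S).posSemidef
  open scoped MatrixOrder in
  have hBB : B * B = S := CFC.sqrt_mul_sqrt_self S hS.posSemidef.nonneg
  have hBsym : Bᵀ = B := by
    ext m n
    have := congrFun (congrFun hBps.1 m) n
    simpa [Matrix.conjTranspose_apply] using this
  have hsymE : ∀ m n, B m n = B n m := by
    intro m n
    conv_lhs => rw [← hBsym]
    exact Matrix.transpose_apply B m n
  have hSsym : Sᵀ = S := by
    ext m n
    have := congrFun (congrFun hS.1 m) n
    simpa [Matrix.conjTranspose_apply] using this
  have hdetS : 0 < S.det := hS.det_pos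
  have hdet2 : B.det * B.det = S.det := by rw [← Matrix.det_mul, hBB]
  have hdetBnn : 0 ≤ B.det := by
    rw [hBps.1.det_eq_prod_eigenvalues]
    exact Finset.prod_nonneg fun m _ => by simpa using hBps.eigenvalues_nonneg m
  have hdetB : B.det = Real.sqrt S.det := by
    rw [← hdet2, Real.sqrt_mul_self hdetBnn]
  have hdetBpos : 0 < B.det := by nlinarith
  have hdetBne : B.det ≠ 0 := hdetBpos.ne'
  have hBunit : IsUnit B.det := isUnit_iff_ne_zero.mpr hdetBne
  have hmat : (S⁻¹ * B)ᵀ * B = 1 := by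
    rw [Matrix.transpose_mul, Matrix.transpose_nonsing_inv, hSsym, hBsym, ← hBB,
      Matrix.mul_inv_rev]
    calc B * (B⁻¹ * B⁻¹) * B = B * B⁻¹ * (B⁻¹ * B) := by
          simp [Matrix.mul_assoc]
      _ = 1 := by rw [Matrix.mul_nonsing_inv _ hBunit, Matrix.nonsing_inv_mul _ hBunit, one_mul]
  have hkey : ∀ y : Fin q → ℝ, (B *ᵥ y) ⬝ᵥ S⁻¹ *ᵥ (B *ᵥ y) = y ⬝ᵥ y := by
    intro y
    rw [Matrix.mulVec_mulVec, Matrix.dotProduct_mulVec, ← Matrix.mulVec_transpose,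
      Matrix.mulVec_mulVec, hmat, Matrix.one_mulVec]
  -- constants
  set c1 : ℝ := Real.Gamma ((q:ℝ)/2) /
    (Real.pi ^ ((q:ℝ)/2) * Real.Gamma a * b ^ a * S.det ^ ((1:ℝ)/2)) with hc1
  set R : ℝ := (Real.sqrt Real.pi ^ q / Real.Gamma ((q:ℝ)/2 + 1)) * (q:ℝ) *
    (b ^ (a+1) * Real.Gamma (a+1) / 2) with hRdef
  set f : (Fin q → ℝ) → ℝ :=
    fun y => (y ⬝ᵥ y) ^ (a - (q:ℝ)/2) * Real.exp (-(y ⬝ᵥ y)/b) with hf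
  set G : (Fin q → ℝ) → ℝ :=
    fun y => (y ⬝ᵥ y) ^ (a + 1 - (q:ℝ)/2) * Real.exp (-(y ⬝ᵥ y)/b) with hG
  have hR : ∫ y, G y = R := radial_eval hq hb (by linarith : (0:ℝ) < a + 1)
  have hRpos : 0 < R := by
    have h1 : 0 < Real.sqrt Real.pi := Real.sqrt_pos.mpr Real.pi_pos
    have h2 : 0 < Real.Gamma ((q:ℝ)/2+1) := Real.Gamma_pos_of_pos (by positivity)
    have h3 : 0 < Real.Gamma (a+1) := Real.Gamma_pos_of_pos (by linarith)
    have h4 : 0 < b ^ (a+1) := Real.rpow_pos_of_pos hb _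
    rw [hRdef]
    positivity
  have hGint : Integrable G := by
    by_contra hcon
    rw [integral_undef hcon] at hR
    exact hRpos.ne' hR.symm
  -- measurability and positivity facts
  have hdotm : Measurable (fun y : Fin q → ℝ => y ⬝ᵥ y) := by
    simp only [dotProduct]
    exact Finset.measurable_sum _ fun m _ => (measurable_pi_apply m).mul (measurable_pi_apply m)
  have hfm : Measurable f := by
    rw [hf]
    exact (hdotm.pow measurable_const).mul ((hdotm.neg.div_const b).exp)
  have hdotnn : ∀ y : Fin q → ℝ, 0 ≤ y ⬝ᵥ y := fun y =>
    Finset.sum_nonneg fun m _ => mul_self_nonneg _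
  have hfnn : ∀ y, 0 ≤ f y := fun y =>
    mul_nonneg (Real.rpow_nonneg (hdotnn y) _) (Real.exp_nonneg _)
  have hGnn : ∀ y, 0 ≤ G y := fun y =>
    mul_nonneg (Real.rpow_nonneg (hdotnn y) _) (Real.exp_nonneg _)
  have hae : ∀ᵐ y : Fin q → ℝ, y ≠ 0 := by
    have h0 : (volume : Measure (Fin q → ℝ)) {(0 : Fin q → ℝ)} = 0 := measure_singleton 0
    rw [ae_iff]
    convert h0 using 2
    ext y
    simp
  have hdot_pos : ∀ y : Fin q → ℝ, y ≠ 0 → 0 < y ⬝ᵥ y := by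
    intro y hy
    rcases Function.ne_iff.mp hy with ⟨m, hm⟩
    simp only [Pi.zero_apply] at hm
    exact Finset.sum_pos' (fun n _ => mul_self_nonneg _)
      ⟨m, Finset.mem_univ m, mul_self_pos.mpr hm⟩
  have htG : ∀ y : Fin q → ℝ, y ≠ 0 → (y ⬝ᵥ y) * f y = G y := by
    intro y hy
    have ht := hdot_pos y hy
    rw [hf, hG, ← mul_assoc]
    congr 1
    nth_rewrite 1 [show (y ⬝ᵥ y) = (y ⬝ᵥ y) ^ (1:ℝ) from (Real.rpow_one _).symm]
    rw [← Real.rpow_add ht]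
    congr 1
    ring
  have hbound : ∀ k l : Fin q, ∀ᵐ y : Fin q → ℝ, ‖y k * y l * f y‖ ≤ ‖G y‖ := by
    intro k l
    filter_upwards [hae] with y hy
    have hk : y k * y k ≤ y ⬝ᵥ y :=
      Finset.single_le_sum (f := fun m => y m * y m) (fun n _ => mul_self_nonneg _)
        (Finset.mem_univ k)
    have hl : y l * y l ≤ y ⬝ᵥ y :=
      Finset.single_le_sum (f := fun m => y m * y m) (fun n _ => mul_self_nonneg _)
        (Finset.mem_univ l)
    have h1 : |y k * y l| ≤ y ⬝ᵥ y := by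
      rw [abs_mul]
      nlinarith [abs_nonneg (y k), abs_nonneg (y l), abs_mul_abs_self (y k),
        abs_mul_abs_self (y l), sq_nonneg (|y k| - |y l|)]
    have h2 : ‖y k * y l * f y‖ = |y k * y l| * f y := by
      rw [Real.norm_eq_abs, abs_mul, abs_of_nonneg (hfnn y)]
    rw [h2, Real.norm_eq_abs, abs_of_nonneg (hGnn y), ← htG y hy]
    exact mul_le_mul_of_nonneg_right h1 (hfnn y)
  have hints : ∀ k l : Fin q, Integrable (fun y : Fin q → ℝ => y k * y l * f y) := by
    intro k l
    exact hGint.mono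
      (((measurable_pi_apply k).mul (measurable_pi_apply l)).mul hfm).aestronglyMeasurable
      (hbound k l)
  -- off-diagonal vanishing
  have hoff : ∀ k l : Fin q, k ≠ l → ∫ y : Fin q → ℝ, y k * y l * f y = 0 := by
    intro k l hkl
    set d : Fin q → ℝ := fun m => if m = k then -1 else 1 with hd
    have habs : |(Matrix.diagonal d).det| = 1 := by
      rw [Matrix.det_diagonal, Finset.abs_prod, Finset.prod_eq_one]
      intro m _
      rw [hd]
      by_cases h : m = k <;> simp [h]
    have hdne : (Matrix.diagonal d).det ≠ 0 := by
      intro h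
      rw [h] at habs
      simp at habs
    have hstep := integral_comp_mulVec (Matrix.diagonal d) hdne
      (fun y => y k * y l * f y)
    have hdotM : ∀ y : Fin q → ℝ,
        (Matrix.diagonal d *ᵥ y) ⬝ᵥ (Matrix.diagonal d *ᵥ y) = y ⬝ᵥ y := by
      intro y
      simp only [dotProduct, Matrix.mulVec_diagonal]
      refine Finset.sum_congr rfl fun m _ => ?_
      rw [hd]
      by_cases h : m = k <;> simp [h] <;> ring
    have hptw : ∀ y : Fin q → ℝ,
        (Matrix.diagonal d *ᵥ y) k * (Matrix.diagonal d *ᵥ y) l * f (Matrix.diagonal d *ᵥ y)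
          = -(y k * y l * f y) := by
      intro y
      have hfM : f (Matrix.diagonal d *ᵥ y) = f y := by
        rw [hf]
        simp only [hdotM]
      have hdk : d k = -1 := by rw [hd]; simp
      have hdl : d l = 1 := by rw [hd]; simp [Ne.symm hkl]
      rw [Matrix.mulVec_diagonal, Matrix.mulVec_diagonal, hfM, hdk, hdl]
      ring
    simp only [hptw] at hstep
    rw [integral_neg, habs, one_mul] at hstep
    linarith
  -- swap symmetry
  have hswap : ∀ k : Fin q, (∫ y : Fin q → ℝ, y k * y k * f y)
      = ∫ y : Fin q → ℝ, y i0 * y i0 * f y := by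
    intro k
    set σ : Fin q ≃ Fin q := Equiv.swap k i0 with hσ
    set em : (Fin q → ℝ) ≃ᵐ (Fin q → ℝ) := MeasurableEquiv.arrowCongr' σ (MeasurableEquiv.refl ℝ)
      with hem
    have hmp : MeasurePreserving em
        (Measure.pi fun _ : Fin q => (volume : Measure ℝ))
        (Measure.pi fun _ : Fin q => (volume : Measure ℝ)) :=
      measurePreserving_arrowCongr' _ _ σ (MeasurableEquiv.refl ℝ)
        (fun _ => MeasurePreserving.id _)
    rw [← MeasureTheory.volume_pi] at hmp
    have h2 := hmp.integral_comp' (fun y : Fin q → ℝ => y k * y k * f y)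
    have hemy : ∀ (y : Fin q → ℝ) (m : Fin q), em y m = y (σ m) := by
      intro y m
      rw [hem]
      simp [MeasurableEquiv.arrowCongr', Equiv.arrowCongr', Equiv.arrowCongr, hσ]
    have hfem : ∀ y : Fin q → ℝ, f (em y) = f y := by
      intro y
      rw [hf]
      have : (em y) ⬝ᵥ (em y) = y ⬝ᵥ y := by
        simp only [dotProduct, hemy]
        exact Equiv.sum_comp σ (fun m => y m * y m)
      simp only [this]
    have hptw : ∀ y : Fin q → ℝ, em y k * em y k * f (em y) = y i0 * y i0 * f y := by
      intro y
      rw [hemy, hfem, hσ]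
      simp [Equiv.swap_apply_left]
    simp only [hptw] at h2
    exact h2.symm
  -- diagonal value
  have hdiagsum : (q : ℝ) * ∫ y : Fin q → ℝ, y i0 * y i0 * f y = R := by
    have hsum : ∑ k : Fin q, ∫ y : Fin q → ℝ, y k * y k * f y
        = (q : ℝ) * ∫ y : Fin q → ℝ, y i0 * y i0 * f y := by
      rw [Finset.sum_congr rfl fun k _ => hswap k]
      simp [Finset.sum_const, Finset.card_univ, nsmul_eq_mul]
    rw [← hsum, ← integral_finset_sum _ (fun k _ => hints k k), ← hR]
    apply integral_congr_ae
    filter_upwards [hae] with y hy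
    have : ∑ k : Fin q, y k * y k * f y = (y ⬝ᵥ y) * f y := by
      rw [← Finset.sum_mul]
      congr 1
    rw [this, htG y hy]
  have hdiag : ∀ k : Fin q, ∫ y : Fin q → ℝ, y k * y k * f y = R / q := by
    intro k
    rw [hswap k]
    field_simp at hdiagsum ⊢
    linarith
  have hJ : ∀ k l : Fin q, ∫ y : Fin q → ℝ, y k * y l * f y
      = if k = l then R / (q:ℝ) else 0 := by
    intro k l
    by_cases h : k = l
    · subst h
      simp [hdiag k]
    · simp [h, hoff k l h]
  -- main computation
  have step1 := integral_comp_mulVec B hdetBne (fun x => x i * x j * pEG S a b x)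
  have hmulvec : ∀ (y : Fin q → ℝ) (m : Fin q), (B *ᵥ y) m = ∑ k, B m k * y k := by
    intro y m
    simp [Matrix.mulVec, dotProduct]
  have hP : ∀ y : Fin q → ℝ, pEG S a b (B *ᵥ y) = c1 * f y := by
    intro y
    unfold pEG
    rw [hkey y, hf, hc1]
    ring
  have hcomp : ∀ y : Fin q → ℝ, (B *ᵥ y) i * (B *ᵥ y) j * pEG S a b (B *ᵥ y)
      = c1 * ∑ k, ∑ l, B i k * B j l * (y k * y l * f y) := by
    intro y
    rw [hP y, hmulvec y i, hmulvec y j, Finset.sum_mul_sum, Finset.sum_mul, Finset.mul_sum]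
    refine Finset.sum_congr rfl fun k _ => ?_
    rw [Finset.sum_mul, Finset.mul_sum]
    refine Finset.sum_congr rfl fun l _ => ?_
    ring
  rw [step1]
  simp only [hcomp]
  rw [MeasureTheory.integral_const_mul,
    integral_finset_sum _ (fun k _ => integrable_finset_sum _ (fun l _ => (hints k l).const_mul _))]
  have hInner : ∀ k : Fin q, (∫ y : Fin q → ℝ, ∑ l, B i k * B j l * (y k * y l * f y))
      = B i k * B j k * (R / q) := by
    intro k
    rw [integral_finset_sum _ (fun l _ => (hints k l).const_mul _)]
    have hterm : ∀ l : Fin q, (∫ y : Fin q → ℝ, B i k * B j l * (y k * y l * f y))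
        = B i k * B j l * (if k = l then R / (q:ℝ) else 0) := by
      intro l
      rw [MeasureTheory.integral_const_mul, hJ k l]
    simp only [hterm, mul_ite, mul_zero]
    simp [Finset.sum_ite_eq]
  simp only [hInner]
  rw [← Finset.sum_mul]
  have hBS : ∑ k, B i k * B j k = S i j := by
    calc ∑ k, B i k * B j k = ∑ k, B i k * B k j :=
          Finset.sum_congr rfl fun k _ => by rw [hsymE j k]
      _ = (B * B) i j := (Matrix.mul_apply).symm
      _ = S i j := by rw [hBB]
  rw [hBS]
  -- final scalar computation
  have habsdet : |B.det| = Real.sqrt S.det := by rw [abs_of_pos hdetBpos, hdetB]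
  have hrpow_half : S.det ^ ((1:ℝ)/2) = Real.sqrt S.det := (Real.sqrt_eq_rpow _).symm
  have hsqpi : Real.sqrt Real.pi ^ q = Real.pi ^ ((q:ℝ)/2) := by
    rw [Real.sqrt_eq_rpow, ← Real.rpow_natCast (Real.pi ^ ((1:ℝ)/2)) q,
      ← Real.rpow_mul Real.pi_pos.le]
    congr 1
    ring
  have hGam_q : Real.Gamma ((q:ℝ)/2 + 1) = ((q:ℝ)/2) * Real.Gamma ((q:ℝ)/2) :=
    Real.Gamma_add_one (by positivity)
  have hGam_a : Real.Gamma (a + 1) = a * Real.Gamma a := Real.Gamma_add_one ha.ne'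
  have hba : b ^ (a+1) = b ^ a * b := by rw [Real.rpow_add hb, Real.rpow_one]
  have hGamq_pos : 0 < Real.Gamma ((q:ℝ)/2) := Real.Gamma_pos_of_pos (by positivity)
  have hGama_pos : 0 < Real.Gamma a := Real.Gamma_pos_of_pos ha
  have hpi_pos : (0:ℝ) < Real.pi ^ ((q:ℝ)/2) := Real.rpow_pos_of_pos Real.pi_pos _
  have hbapos : (0:ℝ) < b ^ a := Real.rpow_pos_of_pos hb _
  have hsq_pos : 0 < Real.sqrt S.det := Real.sqrt_pos.mpr hdetS
  have hscalar : |B.det| * (c1 * (S i j * (R / q))) = a * b / q * S i j := by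
    rw [habsdet, hc1, hrpow_half, hRdef, hsqpi, hGam_q, hGam_a, hba]
    field_simp
  exact hscalar


/-- The second moment matrix of the elliptical gamma distribution is `(a·b/q)·Σ`
(entrywise); in particular for `b = q/a` the covariance matrix equals `Σ`. -/
theorem pEG_second_moment {q : ℕ} (hq : 1 ≤ q)
    {S : Matrix (Fin q) (Fin q) ℝ} (hS : S.PosDef)
    {a b : ℝ} (ha : 0 < a) (hb : 0 < b) :
    (∀ i j : Fin q,
        ∫ x : Fin q → ℝ, x i * x j * pEG S a b x = a * b / q * S i j) ∧
      (b = q / a → ∀ i j : Fin q,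
        ∫ x : Fin q → ℝ, x i * x j * pEG S a b x = S i j) := by
  have hmain := pEG_second_moment_main hq hS ha hb
  refine ⟨hmain, ?_⟩
  intro hbq i j
  rw [hmain i j, hbq]
  have hq0 : (q:ℝ) ≠ 0 := by positivity
  have h1 : a * ((q:ℝ)/a) / q = 1 := by field_simp
  rw [h1, one_mul]
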